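/- For every real number s > 1, the function g defined on (0, ∞) by g(u) = log Γ(us) − s · log Γ(u) is strictly concave on (0, ∞). -/

import Mathlib

set_option maxHeartbeats 1600000

open Real Set Filter Topology

namespace LogGammaAux


lemma summable_shift (x : ℝ) (hx : 0 < x) {p : ℕ} (hp : 1 < p) :
    Summable (fun k : ℕ => 1 / (x + k) ^ p) := by
  have hpos : ∀ k : ℕ, (0:ℝ) < x + k := fun k => by positivity
  have hbase : Summable (fun k : ℕ => 1 / ((k:ℝ) + 1) ^ p) := by
    have := (summable_nat_add_iff (f := fun n : ℕ => 1 / (n:ℝ) ^ p) 1).mpr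
      (summable_one_div_nat_pow.mpr hp)
    refine this.congr fun k => by push_cast; ring
  refine Summable.of_nonneg_of_le (fun k => by positivity) (fun k => ?_)
    (hbase.mul_left ((1 + 1/x) ^ p))
  have h1 : ((k:ℝ) + 1) ^ p ≤ ((1 + 1/x) * (x + k)) ^ p := by
    refine pow_le_pow_left₀ (by positivity) ?_ p
    have hk : (0:ℝ) ≤ k := Nat.cast_nonneg k
    have h2 : (1 + 1/x) * (x + k) = x + k + 1 + k / x := by field_simp; ring
    rw [h2]
    have : 0 ≤ (k:ℝ)/x := by positivity
    linarith
  rw [mul_one_div, div_le_div_iff₀ (pow_pos (hpos k) p) (by positivity)]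
  calc (1:ℝ) * ((k:ℝ)+1)^p = ((k:ℝ)+1)^p := by ring
    _ ≤ ((1+1/x)*(x+k))^p := h1
    _ = (1+1/x)^p * (x+k)^p := by rw [mul_pow]

lemma hasSum_telescope {c : ℕ → ℝ} (hmono : ∀ k, c (k+1) ≤ c k)
    (hlim : Tendsto c atTop (𝓝 0)) : HasSum (fun k => c k - c (k+1)) (c 0) := by
  rw [hasSum_iff_tendsto_nat_of_nonneg (fun k => sub_nonneg.2 (hmono k))]
  have h : ∀ n, ∑ i ∈ Finset.range n, (c i - c (i+1)) = c 0 - c n := by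
    intro n
    induction n with
    | zero => simp
    | succ m ih => rw [Finset.sum_range_succ, ih]; ring
  simp only [h]
  simpa using tendsto_const_nhds.sub hlim

lemma tendsto_inv_shift (x : ℝ) (d : ℝ) {p : ℕ} (hp : 0 < p) :
    Tendsto (fun k : ℕ => 1 / (x + (k:ℝ) + d) ^ p) atTop (𝓝 0) := by
  have h1 : Tendsto (fun k : ℕ => x + (k:ℝ) + d) atTop atTop := by
    apply tendsto_atTop_add_const_right
    exact tendsto_atTop_add_const_left _ _ tendsto_natCast_atTop_atTop
  have h2 : Tendsto (fun k : ℕ => (x + (k:ℝ) + d) ^ p) atTop atTop :=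
    ((tendsto_pow_atTop hp.ne').comp h1)
  simpa [one_div, Function.comp_def] using tendsto_inv_atTop_zero.comp h2



lemma step_sq {A : ℝ} (hA : 0 < A) : 1/(A+1)^2 ≤ 1/(A+1/2) - 1/(A+1+1/2) := by
  have h : 1/(A+1/2) - 1/(A+1+1/2) = 1/((A+1/2)*(A+1+1/2)) := by
    field_simp
    ring
  rw [h, div_le_div_iff₀ (by positivity) (by positivity)]
  nlinarith

lemma step_cube {A : ℝ} (hA : 0 < A) :
    1/(2*A^2) - 1/(2*((A+1))^2) ≤ (1/2)*(1/A^3 + 1/(A+1)^3) := by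
  have h1 : 1/(2*A^2) - 1/(2*(A+1)^2) = ((A+1)^2 - A^2)/(2*(A^2*(A+1)^2)) := by
    field_simp
  have h2 : (1:ℝ)/2*(1/A^3 + 1/(A+1)^3) = (A^3 + (A+1)^3)/(2*(A^3*(A+1)^3)) := by
    field_simp
    ring
  rw [h1, h2, div_le_div_iff₀ (by positivity) (by positivity)]
  nlinarith [pow_pos hA 2, pow_pos hA 3, pow_pos hA 4, sq_nonneg A, hA.le]

lemma sum_sq_le (x : ℝ) (hx : 0 < x) :
    ∑' k : ℕ, 1 / (x + k) ^ 2 ≤ 1 / x ^ 2 + 1 / (x + 1/2) := by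
  have hsum : Summable (fun k : ℕ => 1 / (x + k) ^ 2) := summable_shift x hx one_lt_two
  set c : ℕ → ℝ := fun k => 1/(x + (k:ℝ) + 1/2) with hc
  have htel : HasSum (fun k : ℕ => c k - c (k+1)) (c 0) := by
    refine hasSum_telescope (fun k => ?_) ?_
    · apply one_div_le_one_div_of_le (by positivity)
      push_cast
      linarith
    · simpa only [pow_one] using tendsto_inv_shift x (1/2) one_pos
  rw [Summable.tsum_eq_zero_add hsum]
  have h0 : 1 / (x + ((0:ℕ):ℝ)) ^ 2 = 1 / x ^ 2 := by norm_num
  rw [h0]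
  gcongr
  have hc0 : c 0 = 1/(x + 1/2) := by simp [hc]
  rw [← hc0, ← htel.tsum_eq]
  refine Summable.tsum_le_tsum (fun k => ?_) ((summable_nat_add_iff 1).mpr hsum) htel.summable
  have hA : (0:ℝ) < x + k := by positivity
  have h := step_sq hA
  simp only [hc]
  push_cast
  have e1 : x + ((k:ℝ)+1) = x + (k:ℝ) + 1 := by ring
  rw [e1]
  exact h
  -- goal : 1/((x+k)+1)^2 ≤ 1/(x+k+1/2) - 1/(x+k+1+1/2)

lemma sum_cube_ge (x : ℝ) (hx : 0 < x) :
    1 / x ^ 2 + 1 / x ≤ 2 * x * ∑' k : ℕ, 1 / (x + k) ^ 3 := by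
  set b : ℕ → ℝ := fun k => 1 / (x + k) ^ 3 with hb
  have hsum : Summable b := summable_shift x hx (by norm_num)
  have hshift : Summable (fun k : ℕ => b (k+1)) := (summable_nat_add_iff 1).mpr hsum
  have hid : ∑' k, b k = (1/2) * b 0 + ∑' k, (1/2) * (b k + b (k+1)) := by
    have h1 : ∑' k, (1/2 : ℝ) * (b k + b (k+1))
        = (1/2) * ((∑' k, b k) + ∑' k, b (k+1)) := by
      rw [← Summable.tsum_add hsum hshift, tsum_mul_left]
    have h2 : ∑' k, b (k+1) = (∑' k, b k) - b 0 := by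
      rw [Summable.tsum_eq_zero_add hsum]; ring
    rw [h1, h2]; ring
  set c : ℕ → ℝ := fun k => 1/(2*(x + (k:ℝ))^2) with hc
  have htel : HasSum (fun k : ℕ => c k - c (k+1)) (c 0) := by
    refine hasSum_telescope (fun k => ?_) ?_
    · apply one_div_le_one_div_of_le (by positivity)
      push_cast
      nlinarith [Nat.cast_nonneg (α := ℝ) k]
    · have := tendsto_inv_shift x 0 (p := 2) two_pos
      have h' := this.const_mul (1/2 : ℝ)
      simp only [mul_zero] at h'
      refine h'.congr fun k => ?_
      simp only [hc, add_zero]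
      rw [mul_one_div, div_div]
  have hterm : ∀ k : ℕ, c k - c (k+1) ≤ (1/2) * (b k + b (k+1)) := by
    intro k
    have hA : (0:ℝ) < x + k := by positivity
    have h := step_cube hA
    simp only [hc, hb]
    push_cast
    have e1 : x + ((k:ℝ)+1) = x + (k:ℝ) + 1 := by ring
    rw [e1]
    exact h
  have hle : c 0 ≤ ∑' k, (1/2 : ℝ) * (b k + b (k+1)) := by
    rw [← htel.tsum_eq]
    exact Summable.tsum_le_tsum hterm htel.summable ((hsum.add hshift).mul_left (1/2))
  have hc0 : c 0 = 1/(2*x^2) := by simp [hc]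
  have hb0 : b 0 = 1/x^3 := by simp [hb]
  have hfinal : 1/(2*x^2) + (1/2) * (1/x^3) ≤ ∑' k, b k := by
    rw [hid, hb0]
    rw [hc0] at hle
    linarith
  calc 1/x^2 + 1/x = 2*x * (1/(2*x^2) + (1/2) * (1/x^3)) := by field_simp; ring
    _ ≤ 2*x * ∑' k, b k := by gcongr

lemma keyT (x : ℝ) (hx : 0 < x) : ∑' k : ℕ, ((k:ℝ) - x) / (x + k) ^ 3 < 0 := by
  have hsq : Summable (fun k : ℕ => 1 / (x + k) ^ 2) := summable_shift x hx one_lt_two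
  have hcube : Summable (fun k : ℕ => 1 / (x + k) ^ 3) := summable_shift x hx (by norm_num)
  have hident : ∀ k : ℕ, ((k:ℝ) - x) / (x + k) ^ 3
      = 1 / (x + k) ^ 2 - 2 * x * (1 / (x + k) ^ 3) := by
    intro k
    have h1 : (0:ℝ) < x + k := by positivity
    field_simp
    ring
  have hsum2 : Summable (fun k : ℕ => 2 * x * (1 / (x + k) ^ 3)) := hcube.mul_left _
  have h1 := sum_sq_le x hx
  have h2 := sum_cube_ge x hx
  have hlt : 1 / (x + 1/2) < 1 / x := by
    rw [div_lt_div_iff₀ (by positivity) hx]; linarith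
  calc ∑' k : ℕ, ((k:ℝ) - x) / (x + k) ^ 3
      = ∑' k : ℕ, (1 / (x + k) ^ 2 - 2 * x * (1 / (x + k) ^ 3)) := tsum_congr hident
    _ = (∑' k : ℕ, 1 / (x + k) ^ 2) - ∑' k : ℕ, 2 * x * (1 / (x + k) ^ 3) :=
        Summable.tsum_sub hsq hsum2
    _ = (∑' k : ℕ, 1 / (x + k) ^ 2) - 2 * x * ∑' k : ℕ, 1 / (x + k) ^ 3 := by
        rw [tsum_mul_left]
    _ < 0 := by linarith

lemma summable_keyT (x : ℝ) (hx : 0 < x) :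
    Summable (fun k : ℕ => ((k:ℝ) - x) / (x + k) ^ 3) := by
  have hsq : Summable (fun k : ℕ => 1 / (x + k) ^ 2) := summable_shift x hx one_lt_two
  have hcube : Summable (fun k : ℕ => 1 / (x + k) ^ 3) := summable_shift x hx (by norm_num)
  refine (hsq.sub (hcube.mul_left (2*x))).congr fun k => ?_
  have h1 : (0:ℝ) < x + k := by positivity
  field_simp
  ring



/-- The central inequality: `∑ s²/(su+k)² < ∑ s/(u+k)²` for `s > 1`, `u > 0`. -/
lemma central (s u : ℝ) (hs : 1 < s) (hu : 0 < u) :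
    ∑' k : ℕ, s^2 / (s*u + k)^2 < ∑' k : ℕ, s / (u + k)^2 := by
  have hs0 : (0:ℝ) < s := lt_trans one_pos hs
  -- the functions of λ
  set g : ℕ → ℝ → ℝ := fun k l => l*u / (l*u + k)^2 with hg_def
  set g' : ℕ → ℝ → ℝ := fun k l => u*((k:ℝ) - l*u) / (l*u + k)^3 with hg'_def
  set U : ℕ → ℝ := fun k => u / (u/2 + k)^2 with hU_def
  have hUsum : Summable U := by
    have := (summable_shift (u/2) (by positivity) (p := 2) one_lt_two).mul_left u
    refine this.congr fun k => by rw [mul_one_div]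
  have hpos : ∀ (k : ℕ) (l : ℝ), l ∈ Ioi (1/2 : ℝ) → (0:ℝ) < l*u + k := by
    intro k l hl
    have : (0:ℝ) < l := lt_trans (by norm_num) hl
    positivity
  have hder : ∀ (k : ℕ) (l : ℝ), l ∈ Ioi (1/2 : ℝ) → HasDerivAt (g k) (g' k l) l := by
    intro k l hl
    have hd : (0:ℝ) < l*u + k := hpos k l hl
    have h1 : HasDerivAt (fun l : ℝ => l*u) u l := by simpa using (hasDerivAt_id l).mul_const u
    have h2 : HasDerivAt (fun l : ℝ => (l*u + k)^2) (2*(l*u+k)^(2-1)*u) l := by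
      exact (h1.add_const (k:ℝ)).pow 2
    have h3 := h1.div h2 (by positivity)
    refine h3.congr_deriv ?_
    rw [pow_one]
    field_simp
    ring
  have hbound : ∀ (k : ℕ) (l : ℝ), l ∈ Ioi (1/2 : ℝ) → ‖g' k l‖ ≤ U k := by
    intro k l hl
    have hl0 : (0:ℝ) < l := lt_trans (by norm_num) hl
    have hd : (0:ℝ) < l*u + k := hpos k l hl
    have hnum : |u*((k:ℝ) - l*u)| ≤ u*(l*u + k) := by
      rw [abs_mul, abs_of_pos hu]
      have : |(k:ℝ) - l*u| ≤ l*u + k := by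
        rw [abs_le]
        constructor
        · have : (0:ℝ) ≤ k := Nat.cast_nonneg k
          nlinarith
        · have : (0:ℝ) < l*u := by positivity
          nlinarith [Nat.cast_nonneg (α := ℝ) k]
      exact mul_le_mul_of_nonneg_left this hu.le
    have h1 : ‖g' k l‖ = |u*((k:ℝ) - l*u)| / (l*u + k)^3 := by
      simp only [hg'_def]
      rw [Real.norm_eq_abs, abs_div, abs_of_pos (by positivity : (0:ℝ) < (l*u+k)^3)]
    rw [h1]
    calc |u*((k:ℝ) - l*u)| / (l*u + k)^3 ≤ u*(l*u + k) / (l*u + k)^3 := by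
          gcongr
      _ = u / (l*u + k)^2 := by
          rw [pow_succ, pow_two]
          field_simp
      _ ≤ u / (u/2 + k)^2 := by
          have h2 : u/2 + (k:ℝ) ≤ l*u + k := by
            have : u/2 ≤ l*u := by nlinarith [mem_Ioi.mp hl]
            linarith
          gcongr
      _ = U k := rfl
  have hg0 : Summable (fun k : ℕ => g k 1) := by
    have := (summable_shift u hu (p := 2) one_lt_two).mul_left u
    refine this.congr fun k => ?_
    simp only [hg_def, one_mul, mul_one_div]
  have hF : ∀ l ∈ Ioi (1/2 : ℝ),
      HasDerivAt (fun l => ∑' k : ℕ, g k l) (∑' k : ℕ, g' k l) l := by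
    intro l hl
    exact hasDerivAt_tsum_of_isPreconnected hUsum isOpen_Ioi (convex_Ioi _).isPreconnected
      hder hbound (by norm_num : (1:ℝ) ∈ Ioi (1/2:ℝ)) hg0 hl
  have hderiv_neg : ∀ l ∈ Ioi (1/2 : ℝ), 1 ≤ l → (∑' k : ℕ, g' k l) < 0 := by
    intro l hl hl1
    have hlu : (0:ℝ) < l*u := by nlinarith
    have h1 : (∑' k : ℕ, g' k l) = u * ∑' k : ℕ, ((k:ℝ) - l*u) / (l*u + k)^3 := by
      rw [← tsum_mul_left]
      exact tsum_congr fun k => by simp only [hg'_def]; ring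
    rw [h1]
    exact mul_neg_of_pos_of_neg hu (keyT (l*u) hlu)
  -- strict antitonicity on [1, s]
  have hanti : StrictAntiOn (fun l => ∑' k : ℕ, g k l) (Icc 1 s) := by
    apply strictAntiOn_of_deriv_neg (convex_Icc 1 s)
    · intro l hl
      have hl' : l ∈ Ioi (1/2 : ℝ) := by
        simp only [mem_Icc] at hl
        simp only [mem_Ioi]
        linarith
      exact ((hF l hl').differentiableAt.continuousAt).continuousWithinAt
    · intro l hl
      rw [interior_Icc, mem_Ioo] at hl
      have hl' : l ∈ Ioi (1/2 : ℝ) := by simp only [mem_Ioi]; linarith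
      rw [(hF l hl').deriv]
      exact hderiv_neg l hl' hl.1.le
  have hFs : (∑' k : ℕ, g k s) < ∑' k : ℕ, g k 1 :=
    hanti (left_mem_Icc.mpr hs.le) (right_mem_Icc.mpr hs.le) hs
  -- convert
  have hsu : (0:ℝ) < s/u := by positivity
  have e1 : ∑' k : ℕ, s^2 / (s*u + k)^2 = (s/u) * ∑' k : ℕ, g k s := by
    rw [← tsum_mul_left]
    refine tsum_congr fun k => ?_
    simp only [hg_def]
    have : (0:ℝ) < s*u + k := by positivity
    field_simp
  have e2 : ∑' k : ℕ, s / (u + k)^2 = (s/u) * ∑' k : ℕ, g k 1 := by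
    rw [← tsum_mul_left]
    refine tsum_congr fun k => ?_
    simp only [hg_def, one_mul]
    have : (0:ℝ) < u + k := by positivity
    field_simp
  rw [e1, e2]
  exact mul_lt_mul_of_pos_left hFs hsu



/-- Gauss limit for `log Γ`. -/
lemma gauss (w : ℝ) (hw : 0 < w) :
    Tendsto (fun n : ℕ => w * Real.log n + Real.log (n.factorial : ℝ)
      - ∑ k ∈ Finset.range (n+1), Real.log (w + k)) atTop
      (𝓝 (Real.log (Real.Gamma w))) := by
  have hΓ : Real.Gamma w ≠ 0 := (Real.Gamma_pos_of_pos hw).ne'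
  have hlog : Tendsto (fun n : ℕ => Real.log (Real.GammaSeq w n)) atTop
      (𝓝 (Real.log (Real.Gamma w))) :=
    ((Real.continuousAt_log hΓ).tendsto).comp (Real.GammaSeq_tendsto_Gamma w)
  refine hlog.congr' ?_
  filter_upwards [eventually_ge_atTop 1] with n hn
  have hn0 : (0:ℝ) < n := by exact_mod_cast hn
  have hprod_pos : (0:ℝ) < ∏ j ∈ Finset.range (n+1), (w + j) :=
    Finset.prod_pos fun j _ => by positivity
  have hfact : (0:ℝ) < (n.factorial : ℝ) := by exact_mod_cast Nat.factorial_pos n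
  have hrpow : (0:ℝ) < (n:ℝ) ^ w := Real.rpow_pos_of_pos hn0 w
  rw [Real.GammaSeq, Real.log_div (by positivity) hprod_pos.ne',
    Real.log_mul hrpow.ne' hfact.ne', Real.log_rpow hn0,
    Real.log_prod (fun j _ => by positivity)]

/-- Green-type identity, left part. -/
lemma green1 {f f' f'' : ℝ → ℝ} {x z : ℝ} (hxz : x ≤ z)
    (hd1 : ∀ τ ∈ Icc x z, HasDerivAt f (f' τ) τ)
    (hd2 : ∀ τ ∈ Icc x z, HasDerivAt f' (f'' τ) τ)
    (hcont : ContinuousOn f'' (Icc x z)) :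
    ∫ τ in x..z, (τ - x) * f'' τ = (z - x) * f' z - f z + f x := by
  have huIcc : uIcc x z = Icc x z := uIcc_of_le hxz
  have key : ∀ τ ∈ uIcc x z,
      HasDerivAt (fun t => (t - x) * f' t - f t) ((τ - x) * f'' τ) τ := by
    intro τ hτ
    rw [huIcc] at hτ
    have h1 := (((hasDerivAt_id τ).sub_const x).mul (hd2 τ hτ)).sub (hd1 τ hτ)
    refine h1.congr_deriv ?_
    simp only [id_eq]
    ring
  have hInt : IntervalIntegrable (fun τ => (τ - x) * f'' τ) MeasureTheory.volume x z := by
    apply ContinuousOn.intervalIntegrable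
    rw [huIcc]
    exact (continuousOn_id.sub continuousOn_const).mul hcont
  have h := intervalIntegral.integral_eq_sub_of_hasDerivAt key hInt
  rw [h]
  have hx_mem : x ∈ Icc x z := left_mem_Icc.mpr hxz
  ring

/-- Green-type identity, right part. -/
lemma green2 {f f' f'' : ℝ → ℝ} {z y : ℝ} (hzy : z ≤ y)
    (hd1 : ∀ τ ∈ Icc z y, HasDerivAt f (f' τ) τ)
    (hd2 : ∀ τ ∈ Icc z y, HasDerivAt f' (f'' τ) τ)
    (hcont : ContinuousOn f'' (Icc z y)) :
    ∫ τ in z..y, (y - τ) * f'' τ = f y - f z - (y - z) * f' z := by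
  have huIcc : uIcc z y = Icc z y := uIcc_of_le hzy
  have key : ∀ τ ∈ uIcc z y,
      HasDerivAt (fun t => (y - t) * f' t + f t) ((y - τ) * f'' τ) τ := by
    intro τ hτ
    rw [huIcc] at hτ
    have h1 := (((hasDerivAt_id τ).const_sub y).mul (hd2 τ hτ)).add (hd1 τ hτ)
    refine h1.congr_deriv ?_
    simp only [id_eq]
    ring
  have hInt : IntervalIntegrable (fun τ => (y - τ) * f'' τ) MeasureTheory.volume z y := by
    apply ContinuousOn.intervalIntegrable
    rw [huIcc]
    exact (continuousOn_const.sub continuousOn_id).mul hcont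
  have h := intervalIntegral.integral_eq_sub_of_hasDerivAt key hInt
  rw [h]
  ring



variable {s : ℝ}

lemma hder1 (hs0 : 0 < s) (k : ℕ) {u : ℝ} (hu : 0 < u) :
    HasDerivAt (fun u : ℝ => s * Real.log (u + k) - Real.log (u * s + k))
      (s / (u + k) - s / (u * s + k)) u := by
  have h1 : (0:ℝ) < u + k := by positivity
  have h2 : (0:ℝ) < u * s + k := by positivity
  have ha : HasDerivAt (fun u : ℝ => u + (k:ℝ)) 1 u := (hasDerivAt_id u).add_const _
  have hb : HasDerivAt (fun u : ℝ => u * s + k) s u := by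
    simpa using ((hasDerivAt_id u).mul_const s).add_const (k:ℝ)
  have hla : HasDerivAt (fun u : ℝ => Real.log (u + k)) (1 / (u + k)) u := ha.log h1.ne'
  have hlb : HasDerivAt (fun u : ℝ => Real.log (u * s + k)) (s / (u * s + k)) u :=
    hb.log h2.ne'
  have := (hla.const_mul s).sub hlb
  refine this.congr_deriv ?_
  ring

lemma hder2 (hs0 : 0 < s) (k : ℕ) {u : ℝ} (hu : 0 < u) :
    HasDerivAt (fun u : ℝ => s / (u + k) - s / (u * s + k))
      (s^2 / (u * s + k)^2 - s / (u + k)^2) u := by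
  have h1 : (0:ℝ) < u + k := by positivity
  have h2 : (0:ℝ) < u * s + k := by positivity
  have ha : HasDerivAt (fun u : ℝ => u + (k:ℝ)) 1 u := (hasDerivAt_id u).add_const _
  have hb : HasDerivAt (fun u : ℝ => u * s + k) s u := by
    simpa using ((hasDerivAt_id u).mul_const s).add_const (k:ℝ)
  have hia : HasDerivAt (fun u : ℝ => ((u + (k:ℝ)))⁻¹) (-1 / (u + k)^2) u := by
    simpa using ha.fun_inv h1.ne'
  have hib : HasDerivAt (fun u : ℝ => ((u * s + (k:ℝ)))⁻¹) (-s / (u * s + k)^2) u := by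
    simpa using hb.fun_inv h2.ne'
  have h := (hia.const_mul s).fun_sub (hib.const_mul s)
  have e1 : (fun u : ℝ => s * ((u + (k:ℝ)))⁻¹ - s * ((u * s + (k:ℝ)))⁻¹)
      = (fun u : ℝ => s / (u + k) - s / (u * s + k)) := by
    funext v
    rw [← div_eq_mul_inv, ← div_eq_mul_inv]
  rw [e1] at h
  refine h.congr_deriv ?_
  field_simp
  ring

lemma t2cont (hs0 : 0 < s) (k : ℕ) :
    ContinuousOn (fun τ : ℝ => s^2 / (τ * s + k)^2 - s / (τ + k)^2) (Ioi 0) := by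
  intro τ hτ
  have hτ0 : (0:ℝ) < τ := hτ
  have hd1 : ((τ*s+(k:ℝ))^2) ≠ 0 := by positivity
  have hd2 : ((τ+(k:ℝ))^2) ≠ 0 := by positivity
  have hc1 : ContinuousAt (fun τ : ℝ => (τ*s+(k:ℝ))^2) τ := by fun_prop
  have hc2 : ContinuousAt (fun τ : ℝ => (τ+(k:ℝ))^2) τ := by fun_prop
  exact ((continuousAt_const.div hc1 hd1).sub
    (continuousAt_const.div hc2 hd2)).continuousWithinAt

lemma summable_t2abs (x : ℝ) (hs0 : 0 < s) (hx : 0 < x) :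
    Summable (fun k : ℕ => s^2 / (x * s + k)^2 + s / (x + k)^2) := by
  have h1 := (summable_shift (x*s) (by positivity) (p := 2) one_lt_two).mul_left (s^2)
  have h2 := (summable_shift x hx (p := 2) one_lt_two).mul_left s
  refine (h1.add h2).congr fun k => ?_
  rw [mul_one_div, mul_one_div]

lemma t2bound (x : ℝ) (hs0 : 0 < s) (hx : 0 < x) (k : ℕ) {τ : ℝ} (hτ : x ≤ τ) :
    |s^2 / (τ * s + k)^2 - s / (τ + k)^2| ≤ s^2 / (x * s + k)^2 + s / (x + k)^2 := by
  have h1 : (0:ℝ) < x * s + k := by positivity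
  have h2 : (0:ℝ) < x + k := by positivity
  have h3 : (0:ℝ) < τ * s + k := by nlinarith
  have h4 : (0:ℝ) < τ + k := by nlinarith
  refine (abs_sub _ _).trans ?_
  gcongr
  · rw [abs_of_pos (by positivity)]
    gcongr
  · rw [abs_of_pos (by positivity)]
    gcongr

lemma summable_t2 (τ : ℝ) (hs0 : 0 < s) (hτ : 0 < τ) :
    Summable (fun k : ℕ => s^2 / (τ * s + k)^2 - s / (τ + k)^2) := by
  have h1 := (summable_shift (τ*s) (by positivity) (p := 2) one_lt_two).mul_left (s^2)
  have h2 := (summable_shift τ hτ (p := 2) one_lt_two).mul_left s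
  refine (h1.sub h2).congr fun k => ?_
  rw [mul_one_div, mul_one_div]

lemma psi_neg (τ : ℝ) (hs : 1 < s) (hτ : 0 < τ) :
    ∑' k : ℕ, (s^2 / (τ * s + k)^2 - s / (τ + k)^2) < 0 := by
  have hs0 : (0:ℝ) < s := lt_trans one_pos hs
  have h1 := (summable_shift (τ*s) (by positivity) (p := 2) one_lt_two).mul_left (s^2)
  have h1' : Summable (fun k : ℕ => s^2 / (τ*s + k)^2) :=
    h1.congr fun k => by rw [mul_one_div]
  have h2 := (summable_shift τ hτ (p := 2) one_lt_two).mul_left s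
  have h2' : Summable (fun k : ℕ => s / (τ + k)^2) :=
    h2.congr fun k => by rw [mul_one_div]
  rw [Summable.tsum_sub h1' h2', sub_neg]
  have e : ∑' k : ℕ, s^2 / (τ*s + k)^2 = ∑' k : ℕ, s^2 / (s*τ + k)^2 :=
    tsum_congr fun k => by rw [mul_comm τ s]
  rw [e]
  exact central s τ hs hτ

lemma psi_cont (x : ℝ) (hs0 : 0 < s) (hx : 0 < x) :
    ContinuousOn (fun τ : ℝ => ∑' k : ℕ, (s^2 / (τ * s + k)^2 - s / (τ + k)^2)) (Ici x) := by
  refine continuousOn_tsum (fun k => ?_) (summable_t2abs x hs0 hx) (fun k τ hτ => ?_)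
  · exact (t2cont hs0 k).mono fun τ hτ => lt_of_lt_of_le hx hτ
  · exact t2bound x hs0 hx k hτ



lemma core (s : ℝ) (hs : 1 < s) {x y a b : ℝ} (hx : 0 < x) (hy : 0 < y) (hxy : x < y)
    (ha : 0 < a) (hb : 0 < b) (hab : a + b = 1) :
    a * (Real.log (Real.Gamma (x*s)) - s * Real.log (Real.Gamma x))
      + b * (Real.log (Real.Gamma (y*s)) - s * Real.log (Real.Gamma y))
      < Real.log (Real.Gamma ((a*x+b*y)*s)) - s * Real.log (Real.Gamma (a*x+b*y)) := by
  have hs0 : (0:ℝ) < s := lt_trans one_pos hs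
  obtain ⟨z, hz_def⟩ : ∃ z : ℝ, z = a*x + b*y := ⟨_, rfl⟩
  have hz : 0 < z := by rw [hz_def]; positivity
  have hxz : x < z := by nlinarith
  have hzy : z < y := by nlinarith
  -- opaque abbreviations
  obtain ⟨t0, ht0⟩ : ∃ t0 : ℕ → ℝ → ℝ,
      t0 = fun (k : ℕ) (u : ℝ) => s * Real.log (u + k) - Real.log (u * s + k) := ⟨_, rfl⟩
  obtain ⟨t1, ht1⟩ : ∃ t1 : ℕ → ℝ → ℝ,
      t1 = fun (k : ℕ) (u : ℝ) => s / (u + k) - s / (u * s + k) := ⟨_, rfl⟩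
  obtain ⟨t2, ht2⟩ : ∃ t2 : ℕ → ℝ → ℝ,
      t2 = fun (k : ℕ) (u : ℝ) => s^2 / (u * s + k)^2 - s / (u + k)^2 := ⟨_, rfl⟩
  -- basic facts about the abbreviations
  have hd1 : ∀ (k : ℕ) (u : ℝ), 0 < u → HasDerivAt (t0 k) (t1 k u) u := by
    simp only [ht0, ht1]; exact fun k u hu => hder1 hs0 k hu
  have hd2 : ∀ (k : ℕ) (u : ℝ), 0 < u → HasDerivAt (t1 k) (t2 k u) u := by
    simp only [ht1, ht2]; exact fun k u hu => hder2 hs0 k hu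
  have hct2 : ∀ k : ℕ, ContinuousOn (t2 k) (Ioi 0) := by
    simp only [ht2]; exact fun k => t2cont hs0 k
  have hΨneg : ∀ τ : ℝ, 0 < τ → (∑' k : ℕ, t2 k τ) < 0 := by
    simp only [ht2]; exact fun τ hτ => psi_neg τ hs hτ
  have hΨcont : ContinuousOn (fun τ => ∑' k : ℕ, t2 k τ) (Ici x) := by
    simp only [ht2]; exact psi_cont x hs0 hx
  have hΨsummable : ∀ τ : ℝ, 0 < τ → Summable (fun k : ℕ => t2 k τ) := by
    simp only [ht2]; exact fun τ hτ => summable_t2 τ hs0 hτ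
  have hbnd : ∀ (k : ℕ) (τ : ℝ), x ≤ τ → |t2 k τ| ≤ s^2 / (x*s + k)^2 + s / (x + k)^2 := by
    simp only [ht2]; exact fun k τ hτ => t2bound x hs0 hx k hτ
  have hWsum : Summable (fun k : ℕ => s^2 / (x*s + k)^2 + s / (x + k)^2) :=
    summable_t2abs x hs0 hx
  have hWpos : ∀ k : ℕ, 0 ≤ s^2 / (x*s + k)^2 + s / (x + k)^2 := fun k => by positivity
  -- per-k Green identity
  have hEk : ∀ k : ℕ,
      a * t0 k x + b * t0 k y - t0 k z
      = a * (∫ τ in x..z, (τ - x) * t2 k τ) + b * (∫ τ in z..y, (y - τ) * t2 k τ) := by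
    intro k
    have hg1 : ∫ τ in x..z, (τ - x) * t2 k τ = (z - x) * t1 k z - t0 k z + t0 k x := by
      refine green1 hxz.le (fun τ hτ => hd1 k τ (lt_of_lt_of_le hx hτ.1))
        (fun τ hτ => hd2 k τ (lt_of_lt_of_le hx hτ.1)) ?_
      exact (hct2 k).mono fun τ hτ => lt_of_lt_of_le hx hτ.1
    have hg2 : ∫ τ in z..y, (y - τ) * t2 k τ = t0 k y - t0 k z - (y - z) * t1 k z := by
      refine green2 hzy.le (fun τ hτ => hd1 k τ (lt_of_lt_of_le hz hτ.1))
        (fun τ hτ => hd2 k τ (lt_of_lt_of_le hz hτ.1)) ?_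
      exact (hct2 k).mono fun τ hτ => lt_of_lt_of_le hz hτ.1
    have h0 : a * (z - x) = b * (y - z) := by nlinarith [hz_def, hab]
    linear_combination (-a) * hg1 + (-b) * hg2 + (t0 k z) * hab - (t1 k z) * h0
  -- integrability of partial integrands
  have hsub1 : Set.uIoc x z ⊆ Ioi (0:ℝ) := by
    rw [uIoc_of_le hxz.le]; exact fun τ hτ => lt_trans hx hτ.1
  have hsub2 : Set.uIoc z y ⊆ Ioi (0:ℝ) := by
    rw [uIoc_of_le hzy.le]; exact fun τ hτ => lt_trans hz hτ.1
  have hsub1' : Icc x z ⊆ Ioi (0:ℝ) := fun τ hτ => lt_of_lt_of_le hx hτ.1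
  have hsub2' : Icc z y ⊆ Ioi (0:ℝ) := fun τ hτ => lt_of_lt_of_le hz hτ.1
  have hint1 : ∀ k : ℕ, IntervalIntegrable (fun τ => (τ - x) * t2 k τ)
      MeasureTheory.volume x z := by
    intro k
    apply ContinuousOn.intervalIntegrable
    rw [uIcc_of_le hxz.le]
    exact (continuousOn_id.sub continuousOn_const).mul ((hct2 k).mono hsub1')
  have hint2 : ∀ k : ℕ, IntervalIntegrable (fun τ => (y - τ) * t2 k τ)
      MeasureTheory.volume z y := by
    intro k
    apply ContinuousOn.intervalIntegrable
    rw [uIcc_of_le hzy.le]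
    exact (continuousOn_const.sub continuousOn_id).mul ((hct2 k).mono hsub2')
  -- partial sum identity
  have hsum_int : ∀ N : ℕ, ∑ k ∈ Finset.range (N+1), (a * t0 k x + b * t0 k y - t0 k z)
      = a * (∫ τ in x..z, ((τ - x) * ∑ k ∈ Finset.range (N+1), t2 k τ))
        + b * (∫ τ in z..y, ((y - τ) * ∑ k ∈ Finset.range (N+1), t2 k τ)) := by
    intro N
    have h1 : ∑ k ∈ Finset.range (N+1), (a * t0 k x + b * t0 k y - t0 k z)
        = ∑ k ∈ Finset.range (N+1), (a * (∫ τ in x..z, (τ - x) * t2 k τ)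
            + b * (∫ τ in z..y, (y - τ) * t2 k τ)) :=
      Finset.sum_congr rfl fun k _ => hEk k
    have e1 : (∫ τ in x..z, ∑ k ∈ Finset.range (N+1), ((τ - x) * t2 k τ))
        = ∫ τ in x..z, ((τ - x) * ∑ k ∈ Finset.range (N+1), t2 k τ) := by
      apply intervalIntegral.integral_congr
      intro τ _
      simp [Finset.mul_sum]
    have e2 : (∫ τ in z..y, ∑ k ∈ Finset.range (N+1), ((y - τ) * t2 k τ))
        = ∫ τ in z..y, ((y - τ) * ∑ k ∈ Finset.range (N+1), t2 k τ) := by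
      apply intervalIntegral.integral_congr
      intro τ _
      simp [Finset.mul_sum]
    rw [h1, Finset.sum_add_distrib, ← Finset.mul_sum, ← Finset.mul_sum,
      ← intervalIntegral.integral_finset_sum (fun k _ => hint1 k),
      ← intervalIntegral.integral_finset_sum (fun k _ => hint2 k), e1, e2]
  -- LHS limit via Gauss
  have hexp : ∀ (u : ℝ) (n : ℕ), ∑ k ∈ Finset.range (n+1), t0 k u
      = ((u*s) * Real.log n + Real.log (n.factorial : ℝ)
          - ∑ k ∈ Finset.range (n+1), Real.log (u*s + k))
        - s * (u * Real.log n + Real.log (n.factorial : ℝ)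
          - ∑ k ∈ Finset.range (n+1), Real.log (u + k))
        + (s - 1) * Real.log (n.factorial : ℝ) := by
    intro u n
    simp only [ht0]
    rw [Finset.sum_sub_distrib, ← Finset.mul_sum]
    ring
  have hLHS : Tendsto (fun n : ℕ => ∑ k ∈ Finset.range (n+1),
        (a * t0 k x + b * t0 k y - t0 k z)) atTop
      (𝓝 ((a * Real.log (Real.Gamma (x*s)) + b * Real.log (Real.Gamma (y*s))
            - Real.log (Real.Gamma (z*s)))
          - s * (a * Real.log (Real.Gamma x) + b * Real.log (Real.Gamma y)
            - Real.log (Real.Gamma z)))) := by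
    have hgx : Tendsto _ atTop _ := gauss (x*s) (by positivity)
    have hgy : Tendsto _ atTop _ := gauss (y*s) (by positivity)
    have hgz : Tendsto _ atTop _ := gauss (z*s) (by positivity)
    have hgx' : Tendsto _ atTop _ := gauss x hx
    have hgy' : Tendsto _ atTop _ := gauss y hy
    have hgz' : Tendsto _ atTop _ := gauss z hz
    have h := (((hgx.const_mul a).add (hgy.const_mul b)).sub hgz).sub
      ((((hgx'.const_mul a).add (hgy'.const_mul b)).sub hgz').const_mul s)
    refine h.congr fun n => ?_
    have e1 := hexp x n
    have e2 := hexp y n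
    have e3 := hexp z n
    have hsplit : ∑ k ∈ Finset.range (n+1), (a * t0 k x + b * t0 k y - t0 k z)
        = a * ∑ k ∈ Finset.range (n+1), t0 k x + b * ∑ k ∈ Finset.range (n+1), t0 k y
          - ∑ k ∈ Finset.range (n+1), t0 k z := by
      rw [Finset.sum_sub_distrib, Finset.sum_add_distrib, ← Finset.mul_sum, ← Finset.mul_sum]
    rw [hsplit, e1, e2, e3]
    linear_combination ((1 - s) * Real.log (n.factorial : ℝ)) * hab
  -- RHS limit via dominated convergence
  have hC : ∀ (N : ℕ) (τ : ℝ), x ≤ τ → |∑ k ∈ Finset.range (N+1), t2 k τ|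
      ≤ ∑' k : ℕ, (s^2 / (x*s + k)^2 + s / (x + k)^2) := by
    intro N τ hτ
    calc |∑ k ∈ Finset.range (N+1), t2 k τ| ≤ ∑ k ∈ Finset.range (N+1), |t2 k τ| :=
          Finset.abs_sum_le_sum_abs _ _
      _ ≤ ∑ k ∈ Finset.range (N+1), (s^2 / (x*s + k)^2 + s / (x + k)^2) :=
          Finset.sum_le_sum fun k _ => hbnd k τ hτ
      _ ≤ ∑' k : ℕ, (s^2 / (x*s + k)^2 + s / (x + k)^2) :=
          Summable.sum_le_tsum _ (fun k _ => hWpos k) hWsum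
  have hpartial : ∀ τ : ℝ, 0 < τ → Tendsto (fun N : ℕ => ∑ k ∈ Finset.range (N+1), t2 k τ)
      atTop (𝓝 (∑' k : ℕ, t2 k τ)) := by
    intro τ hτ
    have h := (hΨsummable τ hτ).hasSum.tendsto_sum_nat
    exact h.comp (tendsto_add_atTop_nat 1)
  have hDCT1 : Tendsto (fun N : ℕ => ∫ τ in x..z, ((τ - x) * ∑ k ∈ Finset.range (N+1), t2 k τ))
      atTop (𝓝 (∫ τ in x..z, (τ - x) * ∑' k : ℕ, t2 k τ)) := by
    refine intervalIntegral.tendsto_integral_filter_of_dominated_convergence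
      (fun τ => (z - x) * ∑' k : ℕ, (s^2 / (x*s + k)^2 + s / (x + k)^2))
      (Eventually.of_forall fun N => ?_) (Eventually.of_forall fun N => ?_) ?_ ?_
    · refine ContinuousOn.aestronglyMeasurable ?_ measurableSet_uIoc
      refine (continuousOn_id.sub continuousOn_const).mul ?_
      refine (continuousOn_finset_sum _ fun k _ => ?_).mono hsub1
      exact hct2 k
    · refine MeasureTheory.ae_of_all _ fun τ hτ => ?_
      rw [uIoc_of_le hxz.le] at hτ
      rw [Real.norm_eq_abs, abs_mul]
      have h1 : |τ - x| ≤ z - x := by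
        rw [abs_of_nonneg (by linarith [hτ.1.le])]; linarith [hτ.2]
      exact mul_le_mul h1 (hC N τ hτ.1.le) (abs_nonneg _)
        (by linarith)
    · exact intervalIntegrable_const
    · refine MeasureTheory.ae_of_all _ fun τ hτ => ?_
      have hτ0 : 0 < τ := hsub1 hτ
      exact (hpartial τ hτ0).const_mul (τ - x)
  have hDCT2 : Tendsto (fun N : ℕ => ∫ τ in z..y, ((y - τ) * ∑ k ∈ Finset.range (N+1), t2 k τ))
      atTop (𝓝 (∫ τ in z..y, (y - τ) * ∑' k : ℕ, t2 k τ)) := by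
    refine intervalIntegral.tendsto_integral_filter_of_dominated_convergence
      (fun τ => (y - z) * ∑' k : ℕ, (s^2 / (x*s + k)^2 + s / (x + k)^2))
      (Eventually.of_forall fun N => ?_) (Eventually.of_forall fun N => ?_) ?_ ?_
    · refine ContinuousOn.aestronglyMeasurable ?_ measurableSet_uIoc
      refine (continuousOn_const.sub continuousOn_id).mul ?_
      refine (continuousOn_finset_sum _ fun k _ => ?_).mono hsub2
      exact hct2 k
    · refine MeasureTheory.ae_of_all _ fun τ hτ => ?_
      rw [uIoc_of_le hzy.le] at hτ
      rw [Real.norm_eq_abs, abs_mul]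
      have h1 : |y - τ| ≤ y - z := by
        rw [abs_of_nonneg (by linarith [hτ.2])]; linarith [hτ.1.le]
      exact mul_le_mul h1 (hC N τ (by linarith [hτ.1.le])) (abs_nonneg _) (by linarith)
    · exact intervalIntegrable_const
    · refine MeasureTheory.ae_of_all _ fun τ hτ => ?_
      have hτ0 : 0 < τ := hsub2 hτ
      exact (hpartial τ hτ0).const_mul (y - τ)
  have hRHS : Tendsto (fun N : ℕ => ∑ k ∈ Finset.range (N+1),
        (a * t0 k x + b * t0 k y - t0 k z)) atTop
      (𝓝 (a * (∫ τ in x..z, (τ - x) * ∑' k : ℕ, t2 k τ)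
        + b * (∫ τ in z..y, (y - τ) * ∑' k : ℕ, t2 k τ))) := by
    have h := (hDCT1.const_mul a).add (hDCT2.const_mul b)
    refine h.congr fun N => (hsum_int N).symm
  -- identify the limits
  have hkey := tendsto_nhds_unique hLHS hRHS
  -- strict negativity of the two integrals
  have hI1 : (∫ τ in x..z, (τ - x) * ∑' k : ℕ, t2 k τ) < 0 := by
    have hpos : 0 < ∫ τ in x..z, (τ - x) * (-(∑' k : ℕ, t2 k τ)) := by
      refine intervalIntegral.integral_pos hxz ?_ ?_ ?_
      · refine (continuousOn_id.sub continuousOn_const).mul ?_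
        exact (hΨcont.mono (fun τ hτ => hτ.1)).neg
      · intro τ hτ
        have hτ0 : 0 < τ := lt_trans hx hτ.1
        have := hΨneg τ hτ0
        have h1 : 0 ≤ τ - x := by linarith [hτ.1.le]
        nlinarith
      · refine ⟨z, right_mem_Icc.mpr hxz.le, ?_⟩
        have := hΨneg z hz
        nlinarith
    have heq : (∫ τ in x..z, (τ - x) * ∑' k : ℕ, t2 k τ)
        = -∫ τ in x..z, (τ - x) * (-(∑' k : ℕ, t2 k τ)) := by
      rw [← intervalIntegral.integral_neg]
      congr 1
      funext τ
      ring
    rw [heq]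
    linarith
  have hI2 : (∫ τ in z..y, (y - τ) * ∑' k : ℕ, t2 k τ) < 0 := by
    have hpos : 0 < ∫ τ in z..y, (y - τ) * (-(∑' k : ℕ, t2 k τ)) := by
      refine intervalIntegral.integral_pos hzy ?_ ?_ ?_
      · refine (continuousOn_const.sub continuousOn_id).mul ?_
        refine ((hΨcont.mono ?_).neg)
        exact fun τ hτ => le_trans hxz.le hτ.1
      · intro τ hτ
        have hτ0 : 0 < τ := lt_trans hz hτ.1
        have := hΨneg τ hτ0
        have h1 : 0 ≤ y - τ := by linarith [hτ.2]
        nlinarith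
      · refine ⟨z, left_mem_Icc.mpr hzy.le, ?_⟩
        have := hΨneg z hz
        nlinarith
    have heq : (∫ τ in z..y, (y - τ) * ∑' k : ℕ, t2 k τ)
        = -∫ τ in z..y, (y - τ) * (-(∑' k : ℕ, t2 k τ)) := by
      rw [← intervalIntegral.integral_neg]
      congr 1
      funext τ
      ring
    rw [heq]
    linarith
  -- conclude
  have hneg : (a * Real.log (Real.Gamma (x*s)) + b * Real.log (Real.Gamma (y*s))
        - Real.log (Real.Gamma (z*s)))
      - s * (a * Real.log (Real.Gamma x) + b * Real.log (Real.Gamma y)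
        - Real.log (Real.Gamma z)) < 0 := by
    rw [hkey]
    nlinarith [mul_neg_of_pos_of_neg ha hI1, mul_neg_of_pos_of_neg hb hI2]
  rw [← hz_def]
  nlinarith [hneg]


end LogGammaAux

open LogGammaAux in
/-- For `s > 1`, the function `g(u) = log Γ(us) − s log Γ(u)` is strictly concave
on `(0, ∞)`. -/
theorem logGamma_combination_strictConcave (s : ℝ) (hs : 1 < s) :
    StrictConcaveOn ℝ (Ioi (0 : ℝ))
      (fun u : ℝ => Real.log (Real.Gamma (u * s)) - s * Real.log (Real.Gamma u)) := by
  constructor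
  · exact convex_Ioi 0
  · intro x hx y hy hxy a b ha hb hab
    simp only [smul_eq_mul]
    rw [mem_Ioi] at hx hy
    rcases lt_or_gt_of_ne hxy with h | h
    · exact core s hs hx hy h ha hb hab
    · have hcore := core s hs hy hx h hb ha (by linarith)
      have e : b*y + a*x = a*x + b*y := by ring
      rw [e] at hcore
      linarith
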